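/- For every integer n ≥ 1 there exist real numbers q_1, q_2, …, q_n, pairwise distinct, with q_1 = 1 and q_k ∈ (0,1) for 2 ≤ k ≤ n, such that Σ_{k=1}^n p_k^(n)·z^k = Π_{k=1}^{n}(1 − q_k + q_k·z) for all real z. Equivalently, the vertex-number distribution (p_k^(n))_{k=1}^n is the distribution of 1 + B_2 + ⋯ + B_n for independent Bernoulli random variables B_k with success probabilities q_k. -/

import Mathlib

open Finset

/-- `p n k` is the probability `p_k^{(n)} = P(f_0(T_n) = k)` that the random convex chain
`T_n` has exactly `k` vertices (besides the two corners), given by Buchta's formula: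
`p_k^{(n)} = 2^k · Σ_{i_1+⋯+i_k = n, i_j ≥ 1} Π_{j=1}^{k} i_j / (s_j (s_j + 1))`,
where `s_j = i_1 + ⋯ + i_j`.  In particular `p 0 0 = 1` and `p n 0 = 0` for `n ≥ 1`,
and `p n k = 0` for `k > n`. -/
noncomputable def p (n k : ℕ) : ℝ :=
  2 ^ k *
    ∑ i ∈ (Fintype.piFinset fun _ : Fin k => Finset.Icc 1 n).filter
        (fun i => ∑ j, i j = n),
      ∏ j : Fin k,
        (i j : ℝ) /
          (((∑ l ∈ Finset.univ.filter (fun l => l ≤ j), i l : ℕ) : ℝ) *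
            (((∑ l ∈ Finset.univ.filter (fun l => l ≤ j), i l : ℕ) : ℝ) + 1))


lemma filter_le_castSucc {k : ℕ} (j : Fin k) :
    Finset.univ.filter (fun l : Fin (k+1) => l ≤ j.castSucc)
      = (Finset.univ.filter (fun l : Fin k => l ≤ j)).map Fin.castSuccEmb := by
  ext l
  simp only [Finset.mem_filter, Finset.mem_univ, true_and, Finset.mem_map,
    Fin.castSuccEmb, Function.Embedding.coeFn_mk]
  constructor
  · intro hl
    have hlv : l.val ≤ j.val := hl
    have hlk : l.val < k := lt_of_le_of_lt hlv j.isLt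
    exact ⟨⟨l.val, hlk⟩, hlv, by ext; simp⟩
  · rintro ⟨l', hl', rfl⟩
    exact hl'

lemma partial_sum_castSucc {k : ℕ} (i : Fin (k+1) → ℕ) (j : Fin k) :
    ∑ l ∈ Finset.univ.filter (fun l => l ≤ j.castSucc), i l
      = ∑ l ∈ Finset.univ.filter (fun l => l ≤ j), Fin.init i l := by
  rw [filter_le_castSucc, Finset.sum_map]
  rfl

noncomputable def a (n k : ℕ) : ℝ :=
  ∑ i ∈ (Fintype.piFinset fun _ : Fin k => Finset.Icc 1 n).filter
        (fun i => ∑ j, i j = n),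
      ∏ j : Fin k,
        (i j : ℝ) /
          (((∑ l ∈ Finset.univ.filter (fun l => l ≤ j), i l : ℕ) : ℝ) *
            (((∑ l ∈ Finset.univ.filter (fun l => l ≤ j), i l : ℕ) : ℝ) + 1))

lemma a_rec (n k : ℕ) (hn : 1 ≤ n) :
    a n (k+1) = (∑ m ∈ Finset.range n, ((n : ℝ) - m) * a m k) / (n * (n+1)) := by
  have hrhs : ∑ m ∈ Finset.range n, ((n : ℝ) - m) * a m k
      = ∑ x ∈ (Finset.range n).sigma (fun m =>
          (Fintype.piFinset fun _ : Fin k => Finset.Icc 1 m).filter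
            (fun i => ∑ j, i j = m)),
          ((n : ℝ) - x.1) * ∏ j : Fin k,
            (x.2 j : ℝ) /
              (((∑ l ∈ Finset.univ.filter (fun l => l ≤ j), x.2 l : ℕ) : ℝ) *
                (((∑ l ∈ Finset.univ.filter (fun l => l ≤ j), x.2 l : ℕ) : ℝ) + 1)) := by
    rw [Finset.sum_sigma]
    exact Finset.sum_congr rfl fun m _ => by rw [a, Finset.mul_sum]
  rw [hrhs, eq_div_iff (by positivity), a, Finset.sum_mul]
  have hn0 : ((n : ℝ) * (n + 1)) ≠ 0 := by positivity
  apply Finset.sum_nbij' (i := fun i => (⟨∑ j, Fin.init i j, Fin.init i⟩ :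
      (m : ℕ) × (Fin k → ℕ))) (j := fun x => Fin.snoc x.2 (n - x.1))
  · -- maps into sigma
    intro i hi
    simp only [Finset.mem_filter, Fintype.mem_piFinset, Finset.mem_Icc] at hi
    obtain ⟨h1, h2⟩ := hi
    have hsum : (∑ j, Fin.init i j) + i (Fin.last k) = n := by
      rw [← h2, Fin.sum_univ_castSucc]; rfl
    have hlast : 1 ≤ i (Fin.last k) := (h1 (Fin.last k)).1
    simp only [Finset.mem_sigma, Finset.mem_range, Finset.mem_filter,
      Fintype.mem_piFinset, Finset.mem_Icc]
    refine ⟨by omega, fun j => ⟨(h1 j.castSucc).1, ?_⟩, trivial⟩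
    exact Finset.single_le_sum (f := fun l => Fin.init i l) (fun _ _ => Nat.zero_le _)
      (Finset.mem_univ j)
  · -- maps back
    rintro ⟨m, x⟩ hx
    simp only [Finset.mem_sigma, Finset.mem_range, Finset.mem_filter,
      Fintype.mem_piFinset, Finset.mem_Icc] at hx
    obtain ⟨hm, h1, h2⟩ := hx
    simp only [Finset.mem_filter, Fintype.mem_piFinset, Finset.mem_Icc]
    constructor
    · intro j
      refine Fin.lastCases ?_ ?_ j
      · simp only [Fin.snoc_last]; omega
      · intro j'
        simp only [Fin.snoc_castSucc]
        exact ⟨(h1 j').1, le_trans (h1 j').2 (by omega)⟩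
    · rw [Fin.sum_univ_castSucc]
      simp only [Fin.snoc_castSucc, Fin.snoc_last, h2]
      omega
  · -- left inverse
    intro i hi
    simp only [Finset.mem_filter, Fintype.mem_piFinset, Finset.mem_Icc] at hi
    obtain ⟨h1, h2⟩ := hi
    have hsum : (∑ j, Fin.init i j) + i (Fin.last k) = n := by
      rw [← h2, Fin.sum_univ_castSucc]; rfl
    have : n - (∑ j, Fin.init i j) = i (Fin.last k) := by omega
    rw [this, Fin.snoc_init_self]
  · -- right inverse
    rintro ⟨m, x⟩ hx
    simp only [Finset.mem_sigma, Finset.mem_range, Finset.mem_filter,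
      Fintype.mem_piFinset, Finset.mem_Icc] at hx
    obtain ⟨hm, h1, h2⟩ := hx
    simp only [Fin.init_snoc, h2]
  · -- values
    intro i hi
    simp only [Finset.mem_filter, Fintype.mem_piFinset, Finset.mem_Icc] at hi
    obtain ⟨h1, h2⟩ := hi
    have hsum : (∑ j, Fin.init i j) + i (Fin.last k) = n := by
      rw [← h2, Fin.sum_univ_castSucc]; rfl
    have hfl : Finset.univ.filter (fun l : Fin (k+1) => l ≤ Fin.last k) = Finset.univ := by
      simp [Fin.le_last]
    rw [Fin.prod_univ_castSucc]
    have hterm : ∀ j : Fin k,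
        (i j.castSucc : ℝ) /
          (((∑ l ∈ Finset.univ.filter (fun l => l ≤ j.castSucc), i l : ℕ) : ℝ) *
            (((∑ l ∈ Finset.univ.filter (fun l => l ≤ j.castSucc), i l : ℕ) : ℝ) + 1))
        = (Fin.init i j : ℝ) /
          (((∑ l ∈ Finset.univ.filter (fun l => l ≤ j), Fin.init i l : ℕ) : ℝ) *
            (((∑ l ∈ Finset.univ.filter (fun l => l ≤ j), Fin.init i l : ℕ) : ℝ) + 1)) := by
      intro j
      rw [partial_sum_castSucc]
      rfl
    rw [Finset.prod_congr rfl (fun j _ => hterm j), hfl, h2]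
    have hcast : (i (Fin.last k) : ℝ) = (n : ℝ) - (∑ j, Fin.init i j : ℕ) := by
      have := hsum
      push_cast [← this]
      ring
    rw [hcast, mul_assoc, div_mul_cancel₀ _ hn0]
    ring

lemma a_zero_zero : a 0 0 = 1 := by simp [a]

lemma a_pos_zero (n : ℕ) (hn : 1 ≤ n) : a n 0 = 0 := by
  simp [a]; omega

lemma a_lt (n k : ℕ) (h : n < k) : a n k = 0 := by
  unfold a
  apply Finset.sum_eq_zero
  intro i hi
  exfalso
  simp only [Finset.mem_filter, Fintype.mem_piFinset, Finset.mem_Icc] at hi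
  obtain ⟨h1, h2⟩ := hi
  have : (k : ℕ) ≤ ∑ j : Fin k, i j := by
    calc (k : ℕ) = ∑ _j : Fin k, 1 := by simp
    _ ≤ ∑ j : Fin k, i j := Finset.sum_le_sum fun j _ => (h1 j).1
  omega


lemma p_eq_a (n k : ℕ) : p n k = 2 ^ k * a n k := rfl

noncomputable def F (n : ℕ) (z : ℝ) : ℝ := ∑ k ∈ Finset.Icc 1 n, p n k * z ^ k
noncomputable def E (n : ℕ) (z : ℝ) : ℝ := ∑ k ∈ Finset.range (n+1), p n k * z ^ k

lemma p_lt (n k : ℕ) (h : n < k) : p n k = 0 := by simp [p_eq_a, a_lt n k h]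

lemma E_zero (z : ℝ) : E 0 z = 1 := by
  simp [E, p_eq_a, a_zero_zero]

lemma sum_Icc_one (n : ℕ) (f : ℕ → ℝ) :
    ∑ k ∈ Finset.Icc 1 n, f k = ∑ k ∈ Finset.range n, f (1 + k) := by
  rw [← Finset.Ico_add_one_right_eq_Icc, Finset.sum_Ico_eq_sum_range]
  simp

lemma E_eq_F (n : ℕ) (hn : 1 ≤ n) (z : ℝ) : E n z = F n z := by
  rw [E, F, Finset.sum_range_succ', sum_Icc_one]
  simp [p_eq_a, a_pos_zero n hn, add_comm]

lemma F_rec_one (n : ℕ) (hn : 1 ≤ n) (z : ℝ) :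
    (n : ℝ) * (n+1) * F n z = 2 * z * ∑ m ∈ Finset.range n, ((n : ℝ) - m) * E m z := by
  have key : ∀ k ∈ Finset.Icc 1 n, (n : ℝ) * (n+1) * (p n k * z ^ k)
      = ∑ m ∈ Finset.range n, ((n : ℝ) - m) * (2 ^ k * a m (k-1) * z ^ k) := by
    intro k hk
    simp only [Finset.mem_Icc] at hk
    obtain ⟨hk1, hk2⟩ := hk
    obtain ⟨k', rfl⟩ : ∃ k', k = k' + 1 := ⟨k - 1, by omega⟩
    rw [p_eq_a, a_rec n k' hn]
    have hne : (n : ℝ) * ((n : ℝ) + 1) ≠ 0 := by positivity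
    have h1 : (n : ℝ) * ((n:ℝ)+1) * (2 ^ (k'+1) * ((∑ m ∈ Finset.range n, ((n:ℝ) - m) * a m k') / ((n:ℝ) * ((n:ℝ)+1))) * z ^ (k'+1))
        = (∑ m ∈ Finset.range n, ((n:ℝ) - m) * a m k') * (2 ^ (k'+1) * z ^ (k'+1)) := by
      field_simp
    rw [h1, Finset.sum_mul]
    refine Finset.sum_congr rfl fun m _ => ?_
    simp only [Nat.add_sub_cancel]
    ring
  rw [F, Finset.mul_sum, Finset.sum_congr rfl key, Finset.sum_comm]
  rw [Finset.mul_sum]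
  refine Finset.sum_congr rfl fun m hm => ?_
  simp only [Finset.mem_range] at hm
  have : ∑ k ∈ Finset.Icc 1 n, ((n : ℝ) - m) * (2 ^ k * a m (k-1) * z ^ k)
      = ((n : ℝ) - m) * ∑ j ∈ Finset.range n, (2 ^ (j+1) * a m j * z ^ (j+1)) := by
    rw [Finset.mul_sum, sum_Icc_one]
    refine Finset.sum_congr rfl fun j _ => ?_
    simp [add_comm 1 j]
  rw [this]
  have hE : E m z = ∑ j ∈ Finset.range n, p m j * z ^ j := by
    rw [E]
    refine Finset.sum_subset ?_ ?_
    · intro x hx; simp only [Finset.mem_range] at *; omega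
    · intro x _ hx
      simp only [Finset.mem_range, not_lt] at hx
      rw [p_lt m x (by omega), zero_mul]
  rw [hE]
  simp only [Finset.mul_sum]
  refine Finset.sum_congr rfl fun j _ => ?_
  rw [p_eq_a]
  ring

noncomputable def Sf (n : ℕ) (z : ℝ) : ℝ := ∑ m ∈ Finset.range n, ((n : ℝ) - m) * E m z

lemma F_rec_one' (n : ℕ) (hn : 1 ≤ n) (z : ℝ) :
    (n : ℝ) * (n+1) * F n z = 2 * z * Sf n z := F_rec_one n hn z

lemma Sf_diff (n : ℕ) (z : ℝ) :
    Sf (n+2) z = 2 * Sf (n+1) z - Sf n z + E (n+1) z := by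
  have h1 : Sf (n+1) z = ∑ m ∈ Finset.range (n+2), (((n:ℝ)+1) - m) * E m z := by
    rw [Sf, eq_comm, Finset.sum_range_succ]
    push_cast
    simp
  have h2 : Sf n z = (∑ m ∈ Finset.range (n+2), ((n:ℝ) - m) * E m z) + E (n+1) z := by
    rw [Sf, Finset.sum_range_succ, Finset.sum_range_succ]
    push_cast
    ring
  have h3 : Sf (n+2) z = ∑ m ∈ Finset.range (n+2), (((n:ℝ)+2) - m) * E m z := by
    rw [Sf]; push_cast; rfl
  rw [h1, h2, h3]
  have : ∀ m ∈ Finset.range (n+2), (((n:ℝ)+2) - m) * E m z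
      = 2*((((n:ℝ)+1) - m) * E m z) - ((n:ℝ) - m) * E m z := by
    intro m _
    ring
  rw [Finset.sum_congr rfl this, Finset.sum_sub_distrib, ← Finset.mul_sum]
  ring

lemma a_one_one : a 1 1 = 1/2 := by
  rw [a_rec 1 0 le_rfl]
  norm_num [a_zero_zero]

lemma F_one (z : ℝ) : F 1 z = z := by
  rw [F]
  simp [p_eq_a, a_one_one]

lemma a_two_one : a 2 1 = 1/3 := by
  rw [a_rec 2 0 (by norm_num)]
  rw [Finset.sum_range_succ, Finset.sum_range_succ]
  simp [a_zero_zero, a_pos_zero 1 le_rfl]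
  norm_num

lemma a_two_two : a 2 2 = 1/12 := by
  rw [a_rec 2 1 (by norm_num)]
  rw [Finset.sum_range_succ, Finset.sum_range_succ]
  simp [a_lt 0 1 (by norm_num), a_one_one]
  norm_num

lemma F_two (z : ℝ) : F 2 z = 2/3 * z + 1/3 * z^2 := by
  rw [F, show Finset.Icc 1 2 = {1, 2} by decide]
  rw [Finset.sum_insert (by decide), Finset.sum_singleton]
  rw [p_eq_a, p_eq_a, a_two_one, a_two_two]
  norm_num

lemma F_rec_three (n : ℕ) (z : ℝ) :
    ((n:ℝ)+3)*((n:ℝ)+4) * F (n+3) z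
      = (2*z + 2*((n:ℝ)+2)*((n:ℝ)+3)) * F (n+2) z - ((n:ℝ)+1)*((n:ℝ)+2) * F (n+1) z := by
  have h3 := F_rec_one' (n+3) (by omega) z
  have h2 := F_rec_one' (n+2) (by omega) z
  have h1 := F_rec_one' (n+1) (by omega) z
  have hd := Sf_diff (n+1) z
  have hE : E (n+2) z = F (n+2) z := E_eq_F (n+2) (by omega) z
  push_cast at h3 h2 h1
  rw [hd, hE] at h3
  nlinarith [h3, h2, h1]

open Polynomial

noncomputable def K : ℕ → Polynomial ℝ
  | 0 => 1
  | 1 => Polynomial.C (1/3 : ℝ) * (Polynomial.X + Polynomial.C 2)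
  | (m+2) => Polynomial.C ((((m:ℝ)+3)*((m:ℝ)+4))⁻¹) *
      ((2*Polynomial.X + Polynomial.C (2*((m:ℝ)+2)*((m:ℝ)+3))) * K (m+1)
        - Polynomial.C (((m:ℝ)+1)*((m:ℝ)+2)) * K m)

lemma K_eval_rec (m : ℕ) (x : ℝ) :
    ((m:ℝ)+3)*((m:ℝ)+4) * (K (m+2)).eval x
      = (2*x + 2*((m:ℝ)+2)*((m:ℝ)+3)) * (K (m+1)).eval x
        - ((m:ℝ)+1)*((m:ℝ)+2) * (K m).eval x := by
  have h : (((m:ℝ)+3)*((m:ℝ)+4)) ≠ 0 := by positivity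
  simp only [K, eval_mul, eval_C, eval_sub, eval_add, eval_ofNat, eval_X]
  field_simp

lemma K_eval_one (m : ℕ) : (K m).eval 1 = 1 := by
  induction m using Nat.strong_induction_on with
  | _ m ih =>
    match m with
    | 0 => simp [K]
    | 1 => norm_num [K]
    | (m+2) =>
      have h1 := ih (m+1) (by omega)
      have h0 := ih m (by omega)
      have := K_eval_rec m 1
      rw [h1, h0] at this
      have h : (((m:ℝ)+3)*((m:ℝ)+4)) ≠ 0 := by positivity
      have h2 : ((m:ℝ)+3)*((m:ℝ)+4) * (K (m+2)).eval 1 = ((m:ℝ)+3)*((m:ℝ)+4) * 1 := by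
        rw [this]; ring
      exact mul_left_cancel₀ h h2

lemma K_pos_ratio (m : ℕ) : ∀ x : ℝ, 0 ≤ x →
    0 < (K m).eval x ∧ ((m:ℝ)+2)/((m:ℝ)+3) * (K m).eval x ≤ (K (m+1)).eval x := by
  induction m with
  | zero =>
    intro x hx
    constructor
    · simp [K]
    · simp only [K, eval_mul, eval_C, eval_add, eval_X, eval_one]
      norm_num
      linarith
  | succ m ih =>
    intro x hx
    obtain ⟨h0, hr⟩ := ih x hx
    have h1 : 0 < (K (m+1)).eval x := lt_of_lt_of_le (by positivity) hr
    refine ⟨h1, ?_⟩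
    have hrec := K_eval_rec m x
    have hub : ((m:ℝ)+1)*((m:ℝ)+2) * (K m).eval x
        ≤ ((m:ℝ)+1)*((m:ℝ)+3) * (K (m+1)).eval x := by
      have h2 : ((m:ℝ)+2) * (K m).eval x ≤ ((m:ℝ)+3) * (K (m+1)).eval x := by
        rw [div_mul_eq_mul_div, div_le_iff₀ (by positivity)] at hr
        nlinarith
      nlinarith [h2]
    have key : (((m:ℝ)+3)^2) * (K (m+1)).eval x
        ≤ ((m:ℝ)+3)*((m:ℝ)+4) * (K (m+2)).eval x := by
      rw [hrec]
      nlinarith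
    rw [div_mul_eq_mul_div, div_le_iff₀ (by positivity)]
    have hcast : ((m:ℕ)+1 : ℝ) = (m:ℝ)+1 := by push_cast; ring
    push_cast
    nlinarith

lemma lin_natDegree (c : ℝ) : (2*Polynomial.X + Polynomial.C c).natDegree = 1 := by
  compute_degree!

lemma lin_lc (c : ℝ) : (2*Polynomial.X + Polynomial.C c).leadingCoeff = 2 := by
  rw [Polynomial.leadingCoeff, lin_natDegree]
  simp [Polynomial.coeff_add, Polynomial.coeff_C]

lemma K_deg_lc (m : ℕ) : (K m).natDegree = m ∧ 0 < (K m).leadingCoeff := by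
  induction m using Nat.strong_induction_on with
  | _ m ih =>
    match m with
    | 0 => constructor <;> simp [K]
    | 1 =>
      have h : K 1 = Polynomial.C (1/3 : ℝ) * (Polynomial.X + Polynomial.C 2) := rfl
      constructor
      · rw [h]
        compute_degree!
      · rw [h, leadingCoeff_mul, leadingCoeff_C]
        have : (Polynomial.X + Polynomial.C (2:ℝ)).leadingCoeff = 1 := by
          rw [← Polynomial.Monic]
          exact monic_X_add_C 2
        rw [this]; norm_num
    | (m+2) =>
      obtain ⟨hd1, hl1⟩ := ih (m+1) (by omega)
      obtain ⟨hd0, hl0⟩ := ih m (by omega)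
      have hK1ne : K (m+1) ≠ 0 := fun h => by simp [h] at hl1
      have hlin : (2*Polynomial.X + Polynomial.C (2*((m:ℝ)+2)*((m:ℝ)+3))).natDegree = 1 :=
        lin_natDegree _
      have hlinlc : (2*Polynomial.X + Polynomial.C (2*((m:ℝ)+2)*((m:ℝ)+3))).leadingCoeff = 2 :=
        lin_lc _
      have hlinne : (2*Polynomial.X + Polynomial.C (2*((m:ℝ)+2)*((m:ℝ)+3))) ≠ 0 := by
        intro h; rw [h] at hlin; simp at hlin
      have hprod_deg : ((2*Polynomial.X + Polynomial.C (2*((m:ℝ)+2)*((m:ℝ)+3))) * K (m+1)).natDegree = m+2 := by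
        rw [natDegree_mul hlinne hK1ne, hlin, hd1]
        ring
      have hprod_lc : ((2*Polynomial.X + Polynomial.C (2*((m:ℝ)+2)*((m:ℝ)+3))) * K (m+1)).leadingCoeff
          = 2 * (K (m+1)).leadingCoeff := by
        rw [leadingCoeff_mul, hlinlc]
      have hsub_deg : (Polynomial.C (((m:ℝ)+1)*((m:ℝ)+2)) * K m).natDegree < m+2 := by
        refine lt_of_le_of_lt natDegree_mul_le ?_
        rw [natDegree_C, hd0]
        omega
      have hdeglt : (Polynomial.C (((m:ℝ)+1)*((m:ℝ)+2)) * K m).degree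
          < ((2*Polynomial.X + Polynomial.C (2*((m:ℝ)+2)*((m:ℝ)+3))) * K (m+1)).degree := by
        apply Polynomial.degree_lt_degree
        rw [hprod_deg]
        exact hsub_deg
      have hKdef : K (m+2) = Polynomial.C ((((m:ℝ)+3)*((m:ℝ)+4))⁻¹) *
          ((2*Polynomial.X + Polynomial.C (2*((m:ℝ)+2)*((m:ℝ)+3))) * K (m+1)
            - Polynomial.C (((m:ℝ)+1)*((m:ℝ)+2)) * K m) := rfl
      have hsub_deg' : ((2*Polynomial.X + Polynomial.C (2*((m:ℝ)+2)*((m:ℝ)+3))) * K (m+1)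
            - Polynomial.C (((m:ℝ)+1)*((m:ℝ)+2)) * K m).natDegree = m + 2 := by
        rw [natDegree_sub_eq_left_of_natDegree_lt (by rw [hprod_deg]; exact hsub_deg), hprod_deg]
      have hsub_lc : ((2*Polynomial.X + Polynomial.C (2*((m:ℝ)+2)*((m:ℝ)+3))) * K (m+1)
            - Polynomial.C (((m:ℝ)+1)*((m:ℝ)+2)) * K m).leadingCoeff
          = 2 * (K (m+1)).leadingCoeff := by
        rw [leadingCoeff_sub_of_degree_lt hdeglt, hprod_lc]
      constructor
      · rw [hKdef, natDegree_C_mul (by positivity), hsub_deg']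
      · rw [hKdef, leadingCoeff_mul, leadingCoeff_C, hsub_lc]
        positivity

lemma exists_lt_sign (P : Polynomial ℝ) (hd : P.natDegree ≠ 0) (hl : 0 < P.leadingCoeff)
    (b : ℝ) : ∃ w, w < b ∧ 0 < (-1)^P.natDegree * P.eval w := by
  set d := P.natDegree with hdd
  have hPne : P ≠ 0 := fun h => by simp [h] at hl
  set R : Polynomial ℝ := Polynomial.C ((-1:ℝ)^d) * P.comp (-Polynomial.X) with hR
  have hcompne : P.comp (-Polynomial.X) ≠ 0 := fun h => by
    have := natDegree_comp (p := P) (q := -Polynomial.X)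
    rw [h] at this
    simp at this
    omega
  have hdegcomp : (P.comp (-Polynomial.X)).natDegree = d := by
    rw [natDegree_comp]
    simp
    rfl
  have hlccomp : (P.comp (-Polynomial.X)).leadingCoeff = P.leadingCoeff * (-1)^d := by
    rw [leadingCoeff_comp (by simp)]
    simp
    exact Or.inl rfl
  have hRlc : R.leadingCoeff = P.leadingCoeff := by
    rw [hR, leadingCoeff_mul, leadingCoeff_C, hlccomp]
    rcases Nat.even_or_odd d with he | ho
    · rw [he.neg_one_pow]; ring
    · rw [ho.neg_one_pow]; ring
  have hRdeg : R.natDegree = d := by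
    rw [hR, natDegree_C_mul (by positivity), hdegcomp]
  have hRdegpos : 0 < R.degree := by
    rw [degree_eq_natDegree (fun h => by simp [h] at hRlc; exact hl.ne' hRlc.symm), hRdeg]
    exact_mod_cast Nat.pos_of_ne_zero hd
  have htend := Polynomial.tendsto_atTop_of_leadingCoeff_nonneg R hRdegpos (by rw [hRlc]; exact hl.le)
  have h1 : ∀ᶠ x in Filter.atTop, 0 < R.eval x := htend.eventually_gt_atTop 0
  have h2 : ∀ᶠ x in Filter.atTop, -b < x := Filter.eventually_gt_atTop (-b)
  obtain ⟨x, hx1, hx2⟩ := (h1.and h2).exists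
  refine ⟨-x, by linarith, ?_⟩
  have : R.eval x = (-1)^d * P.eval (-x) := by
    rw [hR]
    simp
  rw [← this]
  exact hx1

lemma sign_prod : ∀ (M : ℕ) (r : Fin M → ℝ) (x : ℝ) (j : ℕ), j ≤ M →
    (∀ i : Fin M, if i.val < j then r i < x else x < r i) →
    0 < (-1:ℝ)^(M - j) * ∏ i, (x - r i) := by
  intro M
  induction M with
  | zero => intro r x j hj h; interval_cases j; simp
  | succ M ih =>
    intro r x j hj h
    rw [Fin.prod_univ_castSucc]
    rcases Nat.lt_or_ge j (M+1) with hlt | hge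
    · -- j ≤ M : last factor negative
      have hlast := h (Fin.last M)
      rw [if_neg (by simp; omega)] at hlast
      have hih := ih (fun i => r i.castSucc) x j (by omega)
        (fun i => by have := h i.castSucc; simpa using this)
      have hMj : M + 1 - j = (M - j) + 1 := by omega
      rw [hMj, pow_succ]
      nlinarith [hih]
    · -- j = M+1 : all factors positive
      have hj' : j = M + 1 := le_antisymm hj hge
      subst hj'
      simp only [Nat.sub_self, pow_zero, one_mul]
      have hpos : ∀ i : Fin (M+1), 0 < x - r i := by
        intro i
        have := h i
        rw [if_pos i.isLt] at this
        linarith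
      have h1 : 0 < ∏ i : Fin M, (x - r i.castSucc) :=
        Finset.prod_pos fun i _ => hpos i.castSucc
      have h2 : 0 < x - r (Fin.last M) := hpos _
      positivity

lemma poly_factor (P : Polynomial ℝ) (M : ℕ) (hdeg : P.natDegree = M)
    (r : Fin M → ℝ) (hr : Function.Injective r) (hroot : ∀ i, P.eval (r i) = 0) :
    P = Polynomial.C P.leadingCoeff * ∏ i, (Polynomial.X - Polynomial.C (r i)) := by
  by_cases hP : P = 0
  · simp [hP]
  set Q := P - Polynomial.C P.leadingCoeff * ∏ i, (Polynomial.X - Polynomial.C (r i)) with hQ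
  have hprodmonic : (∏ i : Fin M, (Polynomial.X - Polynomial.C (r i))).Monic :=
    monic_prod_of_monic _ _ fun i _ => monic_X_sub_C (r i)
  have hproddeg : (∏ i : Fin M, (Polynomial.X - Polynomial.C (r i))).natDegree = M := by
    rw [natDegree_prod _ _ fun i _ => X_sub_C_ne_zero (r i)]
    simp
  have hCne : Polynomial.C P.leadingCoeff * ∏ i, (Polynomial.X - Polynomial.C (r i)) ≠ 0 := by
    apply mul_ne_zero
    · simpa using leadingCoeff_ne_zero.mpr hP
    · exact hprodmonic.ne_zero
  have hcdeg : (Polynomial.C P.leadingCoeff * ∏ i, (Polynomial.X - Polynomial.C (r i))).natDegree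
      = M := by
    rw [natDegree_C_mul (leadingCoeff_ne_zero.mpr hP), hproddeg]
  have hclc : (Polynomial.C P.leadingCoeff * ∏ i, (Polynomial.X - Polynomial.C (r i))).leadingCoeff
      = P.leadingCoeff := by
    rw [leadingCoeff_mul, leadingCoeff_C, hprodmonic.leadingCoeff, mul_one]
  have hroot2 : ∀ i, Q.eval (r i) = 0 := by
    intro i
    rw [hQ]
    simp only [eval_sub, eval_mul, eval_C, eval_prod, eval_X]
    rw [hroot i, Finset.prod_eq_zero (Finset.mem_univ i) (by simp)]
    ring
  have hQ0 : Q = 0 := by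
    by_contra hne
    have hdlt : Q.degree < P.degree := by
      apply degree_sub_lt ?_ hP (hclc.symm)
      rw [degree_eq_natDegree hP, degree_eq_natDegree hCne, hdeg, hcdeg]
    have hlt : Q.natDegree < M := by
      rw [← hdeg]
      exact natDegree_lt_natDegree hne hdlt
    exact hne (Polynomial.eq_zero_of_natDegree_lt_card_of_eval_eq_zero Q hr hroot2
      (by rwa [Fintype.card_fin]))
  have := sub_eq_zero.mp hQ0
  exact this

lemma ivt_sign (f : ℝ → ℝ) (hf : Continuous f) (a b : ℝ) (hab : a < b)
    (h : f a * f b < 0) : ∃ t, t ∈ Set.Ioo a b ∧ f t = 0 := by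
  rcases lt_or_ge (f a) 0 with ha | ha
  · have hb : 0 < f b := by nlinarith
    have : (0:ℝ) ∈ Set.Ioo (f a) (f b) := ⟨ha, hb⟩
    obtain ⟨t, ht, hft⟩ := intermediate_value_Ioo hab.le (hf.continuousOn) this
    exact ⟨t, ht, hft⟩
  · have ha' : 0 < f a := by
      rcases ha.lt_or_eq with h' | h'
      · exact h'
      · rw [← h'] at h; nlinarith
    have hb : f b < 0 := by nlinarith
    have : (0:ℝ) ∈ Set.Ioo (f b) (f a) := ⟨hb, ha'⟩
    obtain ⟨t, ht, hft⟩ := intermediate_value_Ioo' hab.le (hf.continuousOn) this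
    exact ⟨t, ht, hft⟩

def GoodStmt (m : ℕ) : Prop :=
  ∃ r : Fin (m+1) → ℝ, StrictMono r ∧ (∀ i, r i < 0) ∧
    (∀ i, (K (m+1)).eval (r i) = 0) ∧
    (∀ i : Fin (m+1), 0 < (-1:ℝ)^(m - i.val) * (K m).eval (r i))

lemma good (m : ℕ) : GoodStmt m := by
  induction m with
  | zero =>
    refine ⟨fun _ => -2, fun a b hab => absurd hab (by simp only [Fin.lt_def]; omega),
      fun _ => by norm_num, fun i => ?_, fun i => ?_⟩
    · show (K 1).eval (-2) = 0
      norm_num [K]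
    · have : i.val = 0 := by omega
      simp [K, this]
  | succ m ih =>
    obtain ⟨r, hmono, hneg, hroot, hsign⟩ := ih
    obtain ⟨hdeg, hlc⟩ := K_deg_lc (m+1)
    obtain ⟨hdeg2, hlc2⟩ := K_deg_lc (m+2)
    have hfact := poly_factor (K (m+1)) (m+1) hdeg r hmono.injective hroot
    have heval : ∀ x, (K (m+1)).eval x = (K (m+1)).leadingCoeff * ∏ i, (x - r i) := by
      intro x
      conv_lhs => rw [hfact]
      simp [eval_prod]
    have hKsign : ∀ (x : ℝ) (j : ℕ), j ≤ m+1 →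
        (∀ i : Fin (m+1), if i.val < j then r i < x else x < r i) →
        0 < (-1:ℝ)^(m+1-j) * (K (m+1)).eval x := by
      intro x j hj hcond
      have hs := sign_prod (m+1) r x j hj hcond
      rw [heval]
      have := mul_pos hlc hs
      nlinarith [this]
    -- sign of K (m+2) at the roots r i
    have hsign2 : ∀ i : Fin (m+1), 0 < (-1:ℝ)^(m+1 - i.val) * (K (m+2)).eval (r i) := by
      intro i
      have hrec := K_eval_rec m (r i)
      rw [hroot i] at hrec
      have hs := hsign i
      have hi : i.val ≤ m := by omega
      have hpow : (-1:ℝ)^(m+1-i.val) = -(-1:ℝ)^(m-i.val) := by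
        rw [show m+1-i.val = (m-i.val)+1 from by omega, pow_succ]
        ring
      rw [hpow]
      have hc1 : (0:ℝ) < ((m:ℝ)+3)*((m:ℝ)+4) := by positivity
      have hc2 : (0:ℝ) < ((m:ℝ)+1)*((m:ℝ)+2) := by positivity
      have key : ((m:ℝ)+3)*((m:ℝ)+4) * (-(-1:ℝ)^(m-i.val) * (K (m+2)).eval (r i))
          = ((m:ℝ)+1)*((m:ℝ)+2) * ((-1:ℝ)^(m-i.val) * (K m).eval (r i)) := by
        linear_combination (-(-1:ℝ)^(m - i.val)) * hrec
      nlinarith [key, mul_pos hc2 hs, hc1]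
    have h0 : 0 < (K (m+2)).eval 0 := (K_pos_ratio (m+2) 0 le_rfl).1
    obtain ⟨w, hw, hwsign⟩ := exists_lt_sign (K (m+2)) (by rw [hdeg2]; omega) hlc2 (r 0)
    rw [hdeg2] at hwsign
    set f : ℝ → ℝ := fun x => (K (m+2)).eval x with hfdef
    have hcont : Continuous f := by
      rw [hfdef]
      exact (K (m+2)).continuous_aeval
    set left : Fin (m+2) → ℝ := Fin.cases w (fun i => r i) with hleftdef
    set right : Fin (m+2) → ℝ := Fin.snoc (fun i : Fin (m+1) => r i) 0 with hrightdef
    have left_zero : left 0 = w := rfl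
    have left_succ : ∀ i : Fin (m+1), left i.succ = r i := fun i => by
      rw [hleftdef]; simp
    have right_cast : ∀ i : Fin (m+1), right i.castSucc = r i := fun i => by
      rw [hrightdef]; simp
    have right_last : right (Fin.last (m+1)) = 0 := by rw [hrightdef]; simp
    have hlr : ∀ j : Fin (m+2), left j < right j := by
      intro j
      refine Fin.lastCases ?_ ?_ j
      · rw [right_last, ← Fin.succ_last, left_succ]
        exact hneg _
      · intro i
        rw [right_cast]
        refine Fin.cases ?_ ?_ i
        · rw [show (Fin.castSucc (0 : Fin (m+1))) = 0 from rfl, left_zero]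
          exact hw
        · intro i'
          rw [← Fin.succ_castSucc, left_succ]
          exact hmono (Fin.castSucc_lt_succ (i := i'))
    have hsl : ∀ j : Fin (m+2), 0 < (-1:ℝ)^(m+2-j.val) * f (left j) := by
      intro j
      refine Fin.cases ?_ ?_ j
      · rw [left_zero]
        simpa using hwsign
      · intro i
        rw [left_succ]
        have : m + 2 - (i.succ).val = m + 1 - i.val := by
          simp [Fin.val_succ]
        rw [this]
        exact hsign2 i
    have hsr : ∀ j : Fin (m+2), 0 < (-1:ℝ)^(m+1-j.val) * f (right j) := by
      intro j
      refine Fin.lastCases ?_ ?_ j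
      · rw [right_last]
        simpa using h0
      · intro i
        rw [right_cast]
        have : m + 1 - (i.castSucc).val = m + 1 - i.val := by simp
        rw [this]
        exact hsign2 i
    have hts : ∀ j : Fin (m+2), ∃ t, t ∈ Set.Ioo (left j) (right j) ∧ f t = 0 := by
      intro j
      apply ivt_sign f hcont _ _ (hlr j)
      have h1 := hsl j
      have h2 := hsr j
      have hj : j.val ≤ m+1 := by omega
      have hpow : ((-1:ℝ)^(m+2-j.val)) * ((-1:ℝ)^(m+1-j.val)) = -1 := by
        rw [← pow_add, show (m+2-j.val) + (m+1-j.val) = 2*(m+1-j.val)+1 from by omega,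
          pow_succ, pow_mul]
        simp
      have h4 := mul_pos h1 h2
      have h5 : ((-1:ℝ)^(m+2-j.val) * f (left j)) * ((-1:ℝ)^(m+1-j.val) * f (right j))
          = -(f (left j) * f (right j)) := by
        rw [mul_mul_mul_comm, hpow, neg_one_mul]
      rw [h5] at h4
      linarith
    choose t ht hft using hts
    refine ⟨t, ?_, ?_, fun j => hft j, ?_⟩
    · rw [Fin.strictMono_iff_lt_succ]
      intro i
      calc t i.castSucc < right i.castSucc := (ht i.castSucc).2
        _ = r i := right_cast i
        _ = left i.succ := (left_succ i).symm
        _ < t i.succ := (ht i.succ).1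
    · intro j
      refine Fin.lastCases ?_ ?_ j
      · have := (ht (Fin.last (m+1))).2
        rwa [right_last] at this
      · intro i
        have := (ht i.castSucc).2
        rw [right_cast] at this
        exact this.trans (hneg i)
    · intro j
      have hj : j.val ≤ m + 1 := by omega
      have := hKsign (t j) j.val hj ?_
      · exact this
      intro i
      split_ifs with hc
      · refine lt_of_le_of_lt ?_ (ht j).1
        have hjne : j ≠ 0 := by
          intro h
          rw [h] at hc
          simp at hc
        obtain ⟨j', rfl⟩ := Fin.eq_succ_of_ne_zero hjne
        rw [left_succ]
        apply hmono.monotone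
        have : i.val < j'.val + 1 := by simpa [Fin.val_succ] using hc
        exact Fin.le_def.mpr (by omega)
      · refine lt_of_lt_of_le (ht j).2 ?_
        push_neg at hc
        have hjne : j ≠ Fin.last (m+1) := by
          intro h
          rw [h] at hc
          simp at hc
          omega
        obtain ⟨j'', rfl⟩ := Fin.exists_castSucc_eq.mpr hjne
        rw [right_cast]
        apply hmono.monotone
        have : j''.val ≤ i.val := by simpa using hc
        exact Fin.le_def.mpr this


lemma F_eq_K (n : ℕ) : ∀ z : ℝ, F (n+1) z = z * (K n).eval z := by
  induction n using Nat.strong_induction_on with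
  | _ n ih =>
    match n with
    | 0 =>
      intro z
      rw [F_one]
      simp [K]
    | 1 =>
      intro z
      rw [F_two]
      simp only [K, eval_mul, eval_C, eval_add, eval_X]
      norm_num
      ring
    | (m+2) =>
      intro z
      have h1 := ih (m+1) (by omega) z
      have h0 := ih m (by omega) z
      have hF := F_rec_three m z
      have hrec := K_eval_rec m z
      have hne : ((m:ℝ)+3)*((m:ℝ)+4) ≠ 0 := by positivity
      have h1' : F (m+2) z = z * (K (m+1)).eval z := h1
      apply mul_left_cancel₀ hne
      show ((m:ℝ)+3)*((m:ℝ)+4) * F (m+3) z = ((m:ℝ)+3)*((m:ℝ)+4) * (z * (K (m+2)).eval z)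
      linear_combination hF + (2*z + 2*((m:ℝ)+2)*((m:ℝ)+3)) * h1'
        - (((m:ℝ)+1)*((m:ℝ)+2)) * h0 - z * hrec

/-- Corollary (representation as a sum of independent Bernoulli random variables):
for every `n ≥ 1` there are pairwise distinct reals `q_1, …, q_n` with `q_1 = 1` and
`q_k ∈ (0,1)` for `2 ≤ k ≤ n` such that
`Σ_{k=1}^n p_k^{(n)} z^k = Π_{k=1}^{n} (1 − q_k + q_k z)` for all real `z`;
i.e. the vertex-number distribution is that of `1 + B_2 + ⋯ + B_n` with independent
Bernoulli `B_k` of success probability `q_k`. -/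
theorem p_bernoulli_decomposition (n : ℕ) (hn : 1 ≤ n) :
    ∃ q : Fin n → ℝ, Function.Injective q ∧ q ⟨0, hn⟩ = 1 ∧
      (∀ k : Fin n, k ≠ ⟨0, hn⟩ → q k ∈ Set.Ioo (0 : ℝ) 1) ∧
      ∀ z : ℝ, ∑ k ∈ Finset.Icc 1 n, p n k * z ^ k = ∏ k : Fin n, (1 - q k + q k * z) := by
  obtain ⟨m, rfl⟩ : ∃ m, n = m + 1 := ⟨n-1, by omega⟩
  have hs : ∃ s : Fin m → ℝ, StrictMono s ∧ (∀ i, s i < 0) ∧ ∀ i, (K m).eval (s i) = 0 := by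
    match m with
    | 0 => exact ⟨Fin.elim0, fun a b => a.elim0, fun a => a.elim0, fun a => a.elim0⟩
    | (m'+1) =>
      obtain ⟨r, h1, h2, h3, _⟩ := good m'
      exact ⟨r, h1, h2, h3⟩
  obtain ⟨s, hsm, hsneg, hsroot⟩ := hs
  obtain ⟨hdeg, hlc⟩ := K_deg_lc m
  have hfact := poly_factor (K m) m hdeg s hsm.injective hsroot
  have heval : ∀ x : ℝ, (K m).eval x = (K m).leadingCoeff * ∏ i, (x - s i) := by
    intro x
    conv_lhs => rw [hfact]
    simp [eval_prod]
  have hone : (K m).leadingCoeff * ∏ i, (1 - s i) = 1 := by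
    rw [← heval]; exact K_eval_one m
  have hppos : ∀ i, (0:ℝ) < 1 - s i := fun i => by linarith [hsneg i]
  have hprodpos : (0:ℝ) < ∏ i, (1 - s i) := Finset.prod_pos fun i _ => hppos i
  set g : Fin m → ℝ := fun i => 1 / (1 - s i) with hg
  have hg01 : ∀ i, 0 < g i ∧ g i < 1 := by
    intro i
    have h1 : (1:ℝ) < 1 - s i := by linarith [hsneg i]
    have h2 : (0:ℝ) < 1 - s i := by linarith
    constructor
    · show 0 < 1 / (1 - s i)
      positivity
    · show 1 / (1 - s i) < 1
      rw [div_lt_one h2]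
      linarith
  have hgmono : StrictMono g := by
    intro i j hij
    have hij' := hsm hij
    show 1 / (1 - s i) < 1 / (1 - s j)
    have h2 : (0:ℝ) < 1 - s j := by linarith [hsneg j]
    rw [div_lt_div_iff₀ (by linarith [hsneg i]) h2]
    linarith
  refine ⟨Fin.cons 1 g, ?_, ?_, ?_, ?_⟩
  · -- injective
    intro x y hxy
    induction x using Fin.cases with
    | zero =>
      induction y using Fin.cases with
      | zero => rfl
      | succ y' =>
        rw [Fin.cons_zero, Fin.cons_succ] at hxy
        exact absurd hxy.symm (ne_of_lt (hg01 y').2)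
    | succ x' =>
      induction y using Fin.cases with
      | zero =>
        rw [Fin.cons_succ, Fin.cons_zero] at hxy
        exact absurd hxy (ne_of_lt (hg01 x').2)
      | succ y' =>
        rw [Fin.cons_succ, Fin.cons_succ] at hxy
        rw [hgmono.injective hxy]
  · rfl
  · intro k hk
    have hk0 : k ≠ 0 := hk
    obtain ⟨i, rfl⟩ := Fin.eq_succ_of_ne_zero hk0
    rw [Fin.cons_succ]
    exact ⟨(hg01 i).1, (hg01 i).2⟩
  · intro z
    have hF : ∑ k ∈ Finset.Icc 1 (m+1), p (m+1) k * z ^ k = F (m+1) z := rfl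
    rw [hF, F_eq_K m z, heval z]
    rw [Fin.prod_univ_succ]
    simp only [Fin.cons_zero, Fin.cons_succ]
    have hterm : ∀ i : Fin m, 1 - g i + g i * z = (z - s i) / (1 - s i) := by
      intro i
      rw [hg]
      have := (hppos i).ne'
      field_simp
      ring
    rw [Finset.prod_congr rfl fun i _ => hterm i, Finset.prod_div_distrib]
    have hLC : (K m).leadingCoeff = (∏ i, (1 - s i))⁻¹ := by
      field_simp at hone ⊢
      linarith [hone]
    rw [hLC]
    field_simp
    ring
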